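/- Let Q, P, R be 2×2 Hermitian matrices with Q² = P² = R² = I₂ that pairwise anticommute, and let U be a 2×2 unitary matrix satisfying U†QU = Q, U†PU = −P and U†RU = −R. Then there exists z ∈ ℂ with |z| = 1 such that U = zQ. -/

import Mathlib

open Matrix

noncomputable section

abbrev Mat2 := Matrix (Fin 2) (Fin 2) ℂ

lemma polar2 (X Y : Mat2) (hX : X.trace = 0) (hY : Y.trace = 0) :
    X * Y + Y * X = (X * Y).trace • (1 : Mat2) := by
  rw [Matrix.trace_fin_two] at hX hY
  have hx : X 1 1 = -X 0 0 := by linear_combination hX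
  have hy : Y 1 1 = -Y 0 0 := by linear_combination hY
  ext i j
  fin_cases i <;> fin_cases j <;>
    simp [Matrix.mul_apply, Matrix.trace_fin_two, Matrix.one_apply,
      Fin.sum_univ_two, hx, hy] <;> ring

lemma trace_zero_of_anticomm (X Y : Mat2) (hY2 : Y * Y = 1)
    (h : X * Y + Y * X = 0) : X.trace = 0 := by
  have hXY : Y * X = -(X * Y) := eq_neg_of_add_eq_zero_right h
  have h1 : Y * X * Y = -X := by
    calc Y * X * Y = -(X * Y) * Y := by rw [hXY]
    _ = -(X * (Y * Y)) := by noncomm_ring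
    _ = -X := by rw [hY2]; noncomm_ring
  have h2 := congrArg Matrix.trace h1
  rw [Matrix.trace_mul_cycle, hY2, Matrix.one_mul,
    Matrix.trace_neg] at h2
  linear_combination h2 / 2

theorem unitary_fixing_one_flipping_two
    (Q P R : Mat2)
    (hQ : Q.IsHermitian) (hP : P.IsHermitian) (hR : R.IsHermitian)
    (hQ2 : Q * Q = 1) (hP2 : P * P = 1) (hR2 : R * R = 1)
    (hQP : Q * P + P * Q = 0) (hQR : Q * R + R * Q = 0) (hPR : P * R + R * P = 0)
    (U : Mat2) (hU : U ∈ Matrix.unitaryGroup (Fin 2) ℂ)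
    (hconjQ : Uᴴ * Q * U = Q)
    (hconjP : Uᴴ * P * U = -P)
    (hconjR : Uᴴ * R * U = -R) :
    ∃ z : ℂ, ‖z‖ = 1 ∧ U = z • Q := by
  have hUU : Uᴴ * U = 1 := by
    have := hU.1
    rwa [Matrix.star_eq_conjTranspose] at this
  have hUU' : U * Uᴴ = 1 := by
    have := hU.2
    rwa [Matrix.star_eq_conjTranspose] at this
  -- U commutes with Q, anticommutes with P and R
  have hQU : Q * U = U * Q := by
    have h := congrArg (fun M => U * M) hconjQ
    simpa [← Matrix.mul_assoc, hUU', Matrix.one_mul] using h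
  have hPU : P * U = -(U * P) := by
    have h := congrArg (fun M => U * M) hconjP
    simpa [← Matrix.mul_assoc, hUU', Matrix.one_mul, Matrix.mul_neg] using h
  have hRU : R * U = -(U * R) := by
    have h := congrArg (fun M => U * M) hconjR
    simpa [← Matrix.mul_assoc, hUU', Matrix.one_mul, Matrix.mul_neg] using h
  -- W := Q * U commutes with P and R
  set W : Mat2 := Q * U with hWdef
  have hWP : W * P = P * W := by
    calc W * P = Q * (U * P) := by rw [hWdef, Matrix.mul_assoc]
    _ = Q * (-(P * U)) := by rw [hPU, neg_neg]
    _ = -(Q * P) * U := by noncomm_ring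
    _ = (P * Q) * U := by
        have : Q * P = -(P * Q) := eq_neg_of_add_eq_zero_left hQP
        rw [this, neg_neg]
    _ = P * W := by rw [hWdef]; noncomm_ring
  have hWR : W * R = R * W := by
    calc W * R = Q * (U * R) := by rw [hWdef, Matrix.mul_assoc]
    _ = Q * (-(R * U)) := by rw [hRU, neg_neg]
    _ = -(Q * R) * U := by noncomm_ring
    _ = (R * Q) * U := by
        have : Q * R = -(R * Q) := eq_neg_of_add_eq_zero_left hQR
        rw [this, neg_neg]
    _ = R * W := by rw [hWdef]; noncomm_ring
  -- traces of P and R vanish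
  have htP : P.trace = 0 := trace_zero_of_anticomm P R hR2 hPR
  have htR : R.trace = 0 := trace_zero_of_anticomm R P hP2 (by rw [add_comm]; exact hPR)
  -- trace-free part of W
  set c : ℂ := W.trace / 2 with hc
  set W₀ : Mat2 := W - c • 1 with hW0
  have htW0 : W₀.trace = 0 := by
    simp [hW0, Matrix.trace_sub, Matrix.trace_smul, Matrix.trace_one, hc]
  have hW0P : W₀ * P = P * W₀ := by
    simp [hW0, Matrix.sub_mul, Matrix.mul_sub, Matrix.smul_mul, Matrix.mul_smul, hWP]
  have hW0R : W₀ * R = R * W₀ := by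
    simp [hW0, Matrix.sub_mul, Matrix.mul_sub, Matrix.smul_mul, Matrix.mul_smul, hWR]
  -- polarization: W₀ is a multiple of P and of R
  have hp := polar2 W₀ P htW0 htP
  have hr := polar2 W₀ R htW0 htR
  rw [hW0P] at hp
  rw [hW0R] at hr
  set a : ℂ := (P * W₀).trace / 2 with ha
  set b : ℂ := (R * W₀).trace / 2 with hbdef
  have hPW0 : P * W₀ = a • (1 : Mat2) := by
    ext i j
    have h := congrFun (congrFun hp i) j
    simp only [Matrix.add_apply, Matrix.smul_apply, smul_eq_mul] at h ⊢
    rw [ha]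
    linear_combination h / 2
  have hRW0 : R * W₀ = b • (1 : Mat2) := by
    ext i j
    have h := congrFun (congrFun hr i) j
    simp only [Matrix.add_apply, Matrix.smul_apply, smul_eq_mul] at h ⊢
    rw [hbdef]
    linear_combination h / 2
  have hW0a : W₀ = a • P := by
    have h := congrArg (fun M => P * M) hPW0
    simpa [← Matrix.mul_assoc, hP2, Matrix.one_mul, Matrix.mul_smul, Matrix.mul_one] using h
  have hW0b : W₀ = b • R := by
    have h := congrArg (fun M => R * M) hRW0
    simpa [← Matrix.mul_assoc, hR2, Matrix.one_mul, Matrix.mul_smul, Matrix.mul_one] using h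
  -- combine: a-multiple of P anticommutes with R, b-multiple does not, so b = 0
  have hbzero : (2 * b) • (1 : Mat2) = 0 := by
    have h1 : W₀ * R + R * W₀ = a • (P * R + R * P) := by
      rw [hW0a]; simp [Matrix.smul_mul, Matrix.mul_smul, smul_add]
    rw [hPR, smul_zero] at h1
    have h2 : W₀ * R + R * W₀ = (2 * b) • (1 : Mat2) := by
      calc W₀ * R + R * W₀ = b • (R * R) + b • (R * R) := by
            rw [hW0b, Matrix.smul_mul, Matrix.mul_smul]
      _ = (2 * b) • (1 : Mat2) := by rw [hR2, two_mul, add_smul]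
    rw [h1] at h2
    exact h2.symm
  have hb : b = 0 := by
    have h := congrFun (congrFun hbzero 0) 0
    simpa [Matrix.smul_apply, Matrix.one_apply] using h
  have hW0zero : W₀ = 0 := by rw [hW0b, hb, zero_smul]
  have hWc : W = c • 1 := by
    have h : W - c • 1 = 0 := hW0zero
    linear_combination (norm := abel) h
  -- U = c • Q
  have hUQ : U = c • Q := by
    have h1 : Q * W = U := by
      rw [hWdef, ← Matrix.mul_assoc, hQ2, Matrix.one_mul]
    rw [← h1, hWc, Matrix.mul_smul, Matrix.mul_one]
  -- |c| = 1
  have hnorm : ‖c‖ = 1 := by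
    have h1 : Uᴴ * U = (starRingEnd ℂ c * c) • (1 : Mat2) := by
      rw [hUQ, Matrix.conjTranspose_smul, hQ.eq, Matrix.smul_mul, Matrix.mul_smul,
        hQ2, smul_smul]
      rfl
    rw [hUU] at h1
    have h2 := congrFun (congrFun h1 0) 0
    simp [Matrix.smul_apply, Matrix.one_apply] at h2
    have h3 : Complex.normSq c = 1 := by
      have h5 := Complex.normSq_eq_conj_mul_self (z := c)
      rw [← h5] at h2
      exact_mod_cast h2.symm
    have h4 : ‖c‖ ^ 2 = 1 := by
      rw [Complex.sq_norm, h3]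
    nlinarith [norm_nonneg c]
  exact ⟨c, hnorm, hUQ⟩
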